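/- arXiv:2404.18488 — 2 statements merged into one kernel-verified Lean document; each statement's English description precedes it below -/
import Mathlib

section
/- Let (θ, ω) be a solution of the inertial frustrated Kuramoto model with all weights satisfying 0 ≤ ψ_{ij} ≤ ψ_u, and let c > 2, η = 1 − 2/c. Let I be an open interval of times and τ a permutation of {1,…,N} such that ω_{τ(1)}(t) ≤ … ≤ ω_{τ(N)}(t) for all t ∈ I, and define F(t) = (Σ_{i=1}^N c^{i−1}·ω_{τ(i)}(t) − Σ_{i=1}^N c^{N−i}·ω_{τ(i)}(t))/S_c and Q(t) = Y_c(θ(t)). Then for every t ∈ I: m·F'(t) + F(t) ≤ D(Ω) + 2K·ψ_u·sin α + (2K·ψ_u·cos α/η)·Q(t). -/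
open Real Finset

/-- Diameter: max minus min of a finite family of reals. -/
noncomputable def diam {N : ℕ} (v : Fin N → ℝ) : ℝ := (⨆ i, v i) - (⨅ i, v i)

/-- `S_c = Σ_{n=0}^{N-1} c^n`. -/
noncomputable def Sc (N : ℕ) (c : ℝ) : ℝ := ∑ n ∈ Finset.range N, c ^ n

/-- `Y_c(z)`: difference of the two convex-type combinations of the nondecreasing
rearrangement of `z` (weights `c^{i-1}` and `c^{N-i}`), divided by `S_c`. -/
noncomputable def Yc {N : ℕ} (c : ℝ) (z : Fin N → ℝ) : ℝ :=
  (∑ i : Fin N, c ^ (i : ℕ) * z (Tuple.sort z i) -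
   ∑ i : Fin N, c ^ (N - 1 - (i : ℕ)) * z (Tuple.sort z i)) / Sc N c

/-- Difference of the two convex combinations, along a fixed permutation, of a family of
time-dependent quantities. -/
noncomputable def comb {N : ℕ} (c : ℝ) (σ : Equiv.Perm (Fin N)) (g : Fin N → ℝ → ℝ) :
    ℝ → ℝ :=
  fun t => (∑ i : Fin N, c ^ (i : ℕ) * g (σ i) t
    - ∑ i : Fin N, c ^ (N - 1 - (i : ℕ)) * g (σ i) t) / Sc N c


lemma aux_Bk (N k : ℕ) (c : ℝ) (hc : 2 < c) (hk : k + 1 < N) :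
    (1 - 2/c) * (∑ n ∈ Finset.range N, c ^ n) ≤
      ∑ i ∈ Finset.Ico (k+1) N, (c ^ i - c ^ (N - 1 - i)) := by
  have hc0 : (0:ℝ) < c := by linarith
  have hc1 : c ≠ 1 := by linarith
  have h1 : ∀ n : ℕ, ∑ j ∈ Finset.range n, c ^ j = (c ^ n - 1) / (c - 1) :=
    fun n => geom_sum_eq hc1 n
  have hsplit : ∑ i ∈ Finset.Ico (k+1) N, (c ^ i - c ^ (N - 1 - i))
      = (∑ i ∈ Finset.range N, c ^ i - ∑ i ∈ Finset.range (k+1), c ^ i)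
        - ∑ j ∈ Finset.range (N - k - 1), c ^ j := by
    rw [Finset.sum_sub_distrib]
    congr 1
    · rw [Finset.sum_Ico_eq_sub _ (by omega)]
    · rw [Finset.sum_Ico_eq_sum_range]
      have : N - (k+1) = N - k - 1 := by omega
      rw [this]
      rw [← Finset.sum_range_reflect (fun j => c ^ j) (N - k - 1)]
      apply Finset.sum_congr rfl
      intro j hj
      simp only [Finset.mem_range] at hj
      congr 1
      omega
  rw [hsplit, h1, h1, h1]
  have hck : c ^ (k+2) ≤ c ^ N := pow_le_pow_right₀ (by linarith) (by omega)
  have hcn : c ^ (N - k) ≤ c ^ N := pow_le_pow_right₀ (by linarith) (by omega)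
  have e1 : c ^ (k+1) * c = c ^ (k+2) := by rw [← pow_succ]
  have e2 : c ^ (N - k - 1) * c = c ^ (N - k) := by
    rw [← pow_succ]; congr 1; omega
  have hc1' : (0:ℝ) < c - 1 := by linarith
  rw [div_sub_div_same, div_sub_div_same, sub_sub, ← mul_div_assoc,
    div_le_div_iff_of_pos_right hc1']
  have h2 : 1 - 2/c = (c - 2)/c := by field_simp
  rw [h2, div_mul_eq_mul_div, div_le_iff₀ hc0]
  nlinarith [pow_pos hc0 N]

lemma keyNat (N : ℕ) (hN : 2 ≤ N) (c : ℝ) (hc : 2 < c) (g : ℕ → ℝ)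
    (hg : ∀ k, k + 1 < N → g k ≤ g (k+1)) :
    (1 - 2/c) * (∑ n ∈ Finset.range N, c ^ n) * (g (N-1) - g 0) ≤
      ∑ i ∈ Finset.range N, (c ^ i - c ^ (N - 1 - i)) * g i := by
  set S : ℝ := ∑ n ∈ Finset.range N, c ^ n with hS
  have hsum0 : ∑ i ∈ Finset.range N, (c ^ i - c ^ (N - 1 - i)) = 0 := by
    rw [Finset.sum_sub_distrib, Finset.sum_range_reflect (fun j => c ^ j) N, sub_self]
  have step2 : ∑ i ∈ Finset.range N, (c ^ i - c ^ (N - 1 - i)) * g i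
      = ∑ i ∈ Finset.range N, (c ^ i - c ^ (N - 1 - i)) * (g i - g 0) := by
    rw [← sub_eq_zero]
    rw [← Finset.sum_sub_distrib]
    have : ∀ i ∈ Finset.range N, (c ^ i - c ^ (N - 1 - i)) * g i
        - (c ^ i - c ^ (N - 1 - i)) * (g i - g 0)
        = (c ^ i - c ^ (N - 1 - i)) * g 0 := by intro i _; ring
    rw [Finset.sum_congr rfl this, ← Finset.sum_mul, hsum0, zero_mul]
  have step3 : ∀ i, g i - g 0 = ∑ k ∈ Finset.range i, (g (k+1) - g k) := by
    intro i; rw [Finset.sum_range_sub]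
  have step4 : ∑ i ∈ Finset.range N, (c ^ i - c ^ (N - 1 - i)) * (g i - g 0)
      = ∑ k ∈ Finset.range N, (∑ i ∈ Finset.Ico (k+1) N, (c ^ i - c ^ (N - 1 - i)))
          * (g (k+1) - g k) := by
    have := Finset.sum_Ico_Ico_comm' 0 N
      (fun k i => (c ^ i - c ^ (N - 1 - i)) * (g (k+1) - g k))
    simp only [Nat.Ico_zero_eq_range] at this
    calc ∑ i ∈ Finset.range N, (c ^ i - c ^ (N - 1 - i)) * (g i - g 0)
        = ∑ i ∈ Finset.range N, ∑ k ∈ Finset.range i,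
            (c ^ i - c ^ (N - 1 - i)) * (g (k+1) - g k) := by
          refine Finset.sum_congr rfl fun i _ => ?_
          rw [step3 i, Finset.mul_sum]
      _ = ∑ k ∈ Finset.range N, ∑ i ∈ Finset.Ico (k+1) N,
            (c ^ i - c ^ (N - 1 - i)) * (g (k+1) - g k) := this.symm
      _ = ∑ k ∈ Finset.range N, (∑ i ∈ Finset.Ico (k+1) N, (c ^ i - c ^ (N - 1 - i)))
            * (g (k+1) - g k) := by
          refine Finset.sum_congr rfl fun k _ => ?_
          rw [Finset.sum_mul]
  rw [step2, step4]
  obtain ⟨M, rfl⟩ : ∃ M, N = M + 1 := ⟨N-1, by omega⟩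
  rw [Finset.sum_range_succ, Finset.Ico_eq_empty (by omega), Finset.sum_empty,
    zero_mul, add_zero]
  simp only [Nat.add_sub_cancel]
  calc (1 - 2/c) * S * (g M - g 0)
      = ∑ k ∈ Finset.range M, (1 - 2/c) * S * (g (k+1) - g k) := by
        rw [← Finset.mul_sum, Finset.sum_range_sub]
    _ ≤ ∑ k ∈ Finset.range M, (∑ i ∈ Finset.Ico (k+1) (M+1), (c ^ i - c ^ (M + 1 - 1 - i)))
          * (g (k+1) - g k) := by
        refine Finset.sum_le_sum fun k hk => ?_
        simp only [Finset.mem_range] at hk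
        exact mul_le_mul_of_nonneg_right (aux_Bk (M+1) k c hc (by omega))
          (by linarith [hg k (by omega)])

lemma Sc_pos {N : ℕ} (hN : 2 ≤ N) {c : ℝ} (hc : 2 < c) : 0 < Sc N c := by
  refine Finset.sum_pos (fun n _ => pow_pos (by linarith) n) ?_
  exact Finset.nonempty_range_iff.mpr (by omega)

lemma keyYc {N : ℕ} (hN : 2 ≤ N) (c : ℝ) (hc : 2 < c) (z : Fin N → ℝ) (i j : Fin N) :
    (1 - 2/c) * (z j - z i) ≤ Yc c z := by
  have hN1 : N - 1 < N := by omega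
  set σ := Tuple.sort z with hσ
  set w : Fin N → ℝ := z ∘ σ with hw
  have hwmono : Monotone w := Tuple.monotone_sort z
  set g : ℕ → ℝ := fun k => w ⟨min k (N-1), by omega⟩ with hg
  have hgm : ∀ k, k + 1 < N → g k ≤ g (k+1) := by
    intro k hk
    apply hwmono
    simp only [Fin.mk_le_mk]
    omega
  have hkey := keyNat N hN c hc g hgm
  have heq : ∑ i ∈ Finset.range N, (c ^ i - c ^ (N - 1 - i)) * g i
      = ∑ i : Fin N, (c ^ (i:ℕ) - c ^ (N - 1 - (i:ℕ))) * w i := by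
    rw [← Fin.sum_univ_eq_sum_range (fun k => (c ^ k - c ^ (N - 1 - k)) * g k) N]
    refine Finset.sum_congr rfl fun i _ => ?_
    have : (⟨min (i:ℕ) (N-1), by omega⟩ : Fin N) = i := by
      apply Fin.ext; simp; omega
    simp only [g, this]
  have hη : 0 < 1 - 2/c := by
    have : 2/c < 1 := (div_lt_one (by linarith)).mpr (by linarith)
    linarith
  have hS := Sc_pos hN hc
  have hYc : Yc c z = (∑ i : Fin N, (c ^ (i:ℕ) - c ^ (N - 1 - (i:ℕ))) * w i) / Sc N c := by
    rw [Yc, ← Finset.sum_sub_distrib]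
    congr 1
    refine Finset.sum_congr rfl fun i _ => ?_
    simp only [w, hσ, Function.comp]
    ring
  have hzj : z j ≤ g (N-1) := by
    have : z j = w (σ.symm j) := by simp [w]
    rw [this]
    have : g (N-1) = w ⟨N-1, hN1⟩ := by simp [g]
    rw [this]
    apply hwmono
    have := (σ.symm j).isLt
    simp only [Fin.le_def]
    omega
  have hzi : g 0 ≤ z i := by
    have h1 : z i = w (σ.symm i) := by simp [w]
    have h2 : g 0 = w ⟨0, by omega⟩ := by simp [g]
    rw [h1, h2]
    apply hwmono
    simp [Fin.le_def]
  rw [hYc, le_div_iff₀ hS]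
  calc (1 - 2/c) * (z j - z i) * Sc N c
      ≤ (1 - 2/c) * (g (N-1) - g 0) * Sc N c := by
        apply mul_le_mul_of_nonneg_right _ (le_of_lt hS)
        apply mul_le_mul_of_nonneg_left _ (le_of_lt hη)
        linarith
    _ = (1 - 2/c) * (∑ n ∈ Finset.range N, c ^ n) * (g (N-1) - g 0) := by rw [Sc]; ring
    _ ≤ ∑ i ∈ Finset.range N, (c ^ i - c ^ (N - 1 - i)) * g i := hkey
    _ = _ := heq

/-- first-order differential inequality for the frequency combination `F`. -/
theorem stmt11 {N : ℕ} (hN : 2 ≤ N) (m K α ψu : ℝ) (hm : 0 < m) (hK : 0 < K)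
    (hα0 : 0 < α) (hα : α < π / 2)
    (Ω : Fin N → ℝ) (ψ : Fin N → Fin N → ℝ)
    (hψ : ∀ i j, 0 ≤ ψ i j ∧ ψ i j ≤ ψu)
    (θ : Fin N → ℝ → ℝ) (hsmooth : ∀ i, ContDiff ℝ 2 (θ i))
    (hode : ∀ i, ∀ t : ℝ, 0 ≤ t →
      m * deriv (deriv (θ i)) t + deriv (θ i) t =
        Ω i + (K / N) * ∑ j : Fin N, ψ i j * Real.sin (θ j t - θ i t + α))
    (c η : ℝ) (hc : 2 < c) (hη : η = 1 - 2 / c)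
    (t1 t2 : ℝ) (ht1 : 0 ≤ t1)
    (τ : Equiv.Perm (Fin N))
    (hord : ∀ t ∈ Set.Ioo t1 t2, Monotone fun i => deriv (θ (τ i)) t) :
    ∀ t ∈ Set.Ioo t1 t2,
      m * deriv (comb c τ (fun i => deriv (θ i))) t
          + comb c τ (fun i => deriv (θ i)) t ≤
        diam Ω + 2 * K * ψu * Real.sin α
          + (2 * K * ψu * Real.cos α / η) * Yc c (fun i => θ i t) := by
  intro t ht
  obtain ⟨htl, htr⟩ := ht
  have ht0 : (0:ℝ) ≤ t := le_trans ht1 htl.le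
  have hNpos : 0 < N := by omega
  have hS : 0 < Sc N c := Sc_pos hN hc
  have hηpos : 0 < η := by
    rw [hη]
    have : 2/c < 1 := (div_lt_one (by linarith)).mpr (by linarith)
    linarith
  have hπ := Real.pi_pos
  have hsin : 0 < Real.sin α := Real.sin_pos_of_pos_of_lt_pi hα0 (by linarith)
  have hcos : 0 < Real.cos α := Real.cos_pos_of_mem_Ioo ⟨by linarith, hα⟩
  have hψu : 0 ≤ ψu := le_trans (hψ ⟨0, hNpos⟩ ⟨0, hNpos⟩).1 (hψ _ _).2
  have hd2 : ∀ i, Differentiable ℝ (deriv (θ i)) := by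
    intro i
    have h2 : ContDiff ℝ ((1:WithTop ℕ∞)+1) (θ i) := by norm_num; exact hsmooth i
    rw [contDiff_succ_iff_deriv] at h2
    exact h2.2.2.differentiable one_ne_zero
  set ω : Fin N → ℝ → ℝ := fun i => deriv (θ i) with hω
  -- derivative of comb
  have hcomb : HasDerivAt (comb c τ ω)
      ((∑ i : Fin N, c ^ (i:ℕ) * deriv (ω (τ i)) t
        - ∑ i : Fin N, c ^ (N-1-(i:ℕ)) * deriv (ω (τ i)) t) / Sc N c) t := by
    unfold comb
    apply HasDerivAt.div_const
    apply HasDerivAt.sub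
    · exact HasDerivAt.fun_sum fun i _ => ((hd2 (τ i) t).hasDerivAt.const_mul _)
    · exact HasDerivAt.fun_sum fun i _ => ((hd2 (τ i) t).hasDerivAt.const_mul _)
  set R : Fin N → ℝ := fun j =>
    Ω j + (K/N) * ∑ j' : Fin N, ψ j j' * Real.sin (θ j' t - θ j t + α) with hRdef
  have hodeR : ∀ j, m * deriv (deriv (θ j)) t + deriv (θ j) t = R j := fun j => hode j t ht0
  have hmain : m * deriv (comb c τ ω) t + comb c τ ω t
      = (∑ i : Fin N, c ^ (i:ℕ) * R (τ i)
          - ∑ i : Fin N, c ^ (N-1-(i:ℕ)) * R (τ i)) / Sc N c := by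
    rw [hcomb.deriv]
    have e1 : m * (∑ i : Fin N, c^(i:ℕ) * deriv (ω (τ i)) t)
        + ∑ i : Fin N, c^(i:ℕ) * ω (τ i) t = ∑ i : Fin N, c^(i:ℕ) * R (τ i) := by
      rw [Finset.mul_sum, ← Finset.sum_add_distrib]
      refine Finset.sum_congr rfl fun i _ => ?_
      rw [← hodeR (τ i)]; simp only [hω]; ring
    have e2 : m * (∑ i : Fin N, c^(N-1-(i:ℕ)) * deriv (ω (τ i)) t)
        + ∑ i : Fin N, c^(N-1-(i:ℕ)) * ω (τ i) t
        = ∑ i : Fin N, c^(N-1-(i:ℕ)) * R (τ i) := by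
      rw [Finset.mul_sum, ← Finset.sum_add_distrib]
      refine Finset.sum_congr rfl fun i _ => ?_
      rw [← hodeR (τ i)]; simp only [hω]; ring
    unfold comb
    rw [← e1, ← e2]
    ring
  set D : ℝ := Yc c (fun i => θ i t) with hDdef
  have hDθ : ∀ i j : Fin N, θ j t - θ i t ≤ D / η := by
    intro i j
    have h := keyYc hN c hc (fun i => θ i t) i j
    rw [← hη] at h
    rw [le_div_iff₀ hηpos]
    linarith
  have habs : ∀ i j : Fin N, |θ j t - θ i t| ≤ D / η := by
    intro i j
    rw [abs_le]
    constructor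
    · have := hDθ j i
      linarith
    · exact hDθ i j
  have hDdiv : 0 ≤ D / η := le_trans (by simp) (habs ⟨0,hNpos⟩ ⟨0,hNpos⟩)
  set M0 : ℝ := ψu * (Real.sin α + Real.cos α * (D/η)) with hM0def
  have hM0 : 0 ≤ M0 := by
    apply mul_nonneg hψu
    have : 0 ≤ Real.cos α * (D/η) := mul_nonneg hcos.le hDdiv
    linarith
  have hsinbound : ∀ i j : Fin N, |ψ i j * Real.sin (θ j t - θ i t + α)| ≤ M0 := by
    intro i j
    rw [abs_mul, abs_of_nonneg (hψ i j).1]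
    have hx : |Real.sin (θ j t - θ i t + α)| ≤ Real.sin α + Real.cos α * (D/η) := by
      rw [Real.sin_add]
      calc |Real.sin (θ j t - θ i t) * Real.cos α + Real.cos (θ j t - θ i t) * Real.sin α|
          ≤ |Real.sin (θ j t - θ i t)| * |Real.cos α|
            + |Real.cos (θ j t - θ i t)| * |Real.sin α| := by
            refine le_trans (abs_add_le _ _) ?_
            rw [abs_mul, abs_mul]
        _ ≤ (D/η) * Real.cos α + 1 * Real.sin α := by
            rw [abs_of_pos hcos, abs_of_pos hsin]
            gcongr
            · exact le_trans Real.abs_sin_le_abs (habs i j)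
            · exact Real.abs_cos_le_one _
        _ = Real.sin α + Real.cos α * (D/η) := by ring
    calc ψ i j * |Real.sin (θ j t - θ i t + α)|
        ≤ ψu * (Real.sin α + Real.cos α * (D/η)) :=
          mul_le_mul (hψ i j).2 hx (abs_nonneg _) hψu
      _ = M0 := hM0def.symm
  have hC : ∀ j : Fin N, |(K/N) * ∑ j' : Fin N, ψ j j' * Real.sin (θ j' t - θ j t + α)|
      ≤ K * M0 := by
    intro j
    rw [abs_mul]
    have hKN : |K/(N:ℝ)| = K/N := abs_of_pos (div_pos hK (by exact_mod_cast hNpos))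
    rw [hKN]
    have hT : |∑ j' : Fin N, ψ j j' * Real.sin (θ j' t - θ j t + α)| ≤ N * M0 := by
      calc |∑ j' : Fin N, ψ j j' * Real.sin (θ j' t - θ j t + α)|
          ≤ ∑ j' : Fin N, |ψ j j' * Real.sin (θ j' t - θ j t + α)| :=
            Finset.abs_sum_le_sum_abs _ _
        _ ≤ ∑ _j' : Fin N, M0 := Finset.sum_le_sum fun j' _ => hsinbound j j'
        _ = N * M0 := by rw [Finset.sum_const, Finset.card_univ, Fintype.card_fin]; simp
    calc K/(N:ℝ) * |∑ j' : Fin N, ψ j j' * Real.sin (θ j' t - θ j t + α)|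
        ≤ K/(N:ℝ) * ((N:ℝ) * M0) := by
          apply mul_le_mul_of_nonneg_left hT
          positivity
      _ = K * M0 := by
          field_simp
  have hsupΩ : ∀ j, Ω j ≤ ⨆ i, Ω i := fun j =>
    le_ciSup (Set.Finite.bddAbove (Set.finite_range Ω)) j
  have hinfΩ : ∀ j, (⨅ i, Ω i) ≤ Ω j := fun j =>
    ciInf_le (Set.Finite.bddBelow (Set.finite_range Ω)) j
  have hRub : ∀ j, R j ≤ (⨆ i, Ω i) + K * M0 := by
    intro j
    have h1 := (abs_le.mp (hC j)).2
    have := hsupΩ j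
    simp only [hRdef]
    linarith
  have hRlb : ∀ j, (⨅ i, Ω i) - K * M0 ≤ R j := by
    intro j
    have h1 := (abs_le.mp (hC j)).1
    have := hinfΩ j
    simp only [hRdef]
    linarith
  have hsum1 : (∑ i : Fin N, c^(i:ℕ)) = Sc N c :=
    Fin.sum_univ_eq_sum_range (fun k => c ^ k) N
  have hsum2 : (∑ i : Fin N, c^(N-1-(i:ℕ))) = Sc N c := by
    rw [Fin.sum_univ_eq_sum_range (fun k => c ^ (N-1-k)) N]
    exact Finset.sum_range_reflect (fun j => c ^ j) N
  have hcpow : ∀ k : ℕ, (0:ℝ) ≤ c ^ k := fun k => pow_nonneg (by linarith) k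
  have hub : ∑ i : Fin N, c^(i:ℕ) * R (τ i) ≤ Sc N c * ((⨆ i, Ω i) + K * M0) := by
    calc ∑ i : Fin N, c^(i:ℕ) * R (τ i)
        ≤ ∑ i : Fin N, c^(i:ℕ) * ((⨆ i, Ω i) + K * M0) :=
          Finset.sum_le_sum fun i _ =>
            mul_le_mul_of_nonneg_left (hRub (τ i)) (hcpow _)
      _ = (∑ i : Fin N, c^(i:ℕ)) * ((⨆ i, Ω i) + K * M0) := by rw [Finset.sum_mul]
      _ = _ := by rw [hsum1]
  have hlb : Sc N c * ((⨅ i, Ω i) - K * M0) ≤ ∑ i : Fin N, c^(N-1-(i:ℕ)) * R (τ i) := by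
    calc Sc N c * ((⨅ i, Ω i) - K * M0)
        = (∑ i : Fin N, c^(N-1-(i:ℕ))) * ((⨅ i, Ω i) - K * M0) := by rw [hsum2]
      _ = ∑ i : Fin N, c^(N-1-(i:ℕ)) * ((⨅ i, Ω i) - K * M0) := by rw [Finset.sum_mul]
      _ ≤ ∑ i : Fin N, c^(N-1-(i:ℕ)) * R (τ i) :=
          Finset.sum_le_sum fun i _ =>
            mul_le_mul_of_nonneg_left (hRlb (τ i)) (hcpow _)
  rw [hmain, div_le_iff₀ hS]
  have hgoal : (diam Ω + 2*K*ψu*Real.sin α + (2*K*ψu*Real.cos α/η) * D) * Sc N c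
      = Sc N c * ((⨆ i, Ω i) + K * M0) - Sc N c * ((⨅ i, Ω i) - K * M0) := by
    rw [diam, hM0def]
    field_simp
    ring
  linarith
end

section
/- Let (θ, ω) be a solution of the inertial frustrated Kuramoto model with all weights satisfying 0 ≤ ψ_{ij} ≤ ψ_u and with sufficient differentiability (a_i = ω_i', b_i = a_i', b_i' exist), and let c > 2, η = 1 − 2/c. Let D^∞ > 0 and let I be an open interval of times on which D_θ(t) ≤ D^∞, and let χ be a permutation of {1,…,N} such that b_{χ(1)}(t) ≤ … ≤ b_{χ(N)}(t) for all t ∈ I; define B(t) = (Σ_{i=1}^N c^{i−1}·b_{χ(i)}(t) − Σ_{i=1}^N c^{N−i}·b_{χ(i)}(t))/S_c, A(t) = Y_c(a(t)), F(t) = Y_c(ω(t)). Then for every t ∈ I: m·B'(t) + B(t) ≤ (2K·ψ_u/η)·A(t) + (2K·ψ_u·(D^∞·cos α + sin α)/η²)·F(t)². -/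
open Real Finset

/-! ### Auxiliary combinatorial lemmas -/

lemma sc_pos {N : ℕ} (hN : 1 ≤ N) {c : ℝ} (hc : 0 < c) : 0 < Sc N c :=
  Finset.sum_pos (fun n _ => pow_pos hc n) (by simp [Finset.nonempty_range_iff]; omega)

lemma sum_fin_pow {N : ℕ} (c : ℝ) : ∑ i : Fin N, c ^ (i : ℕ) = Sc N c := by
  rw [Sc, ← Fin.sum_univ_eq_sum_range]

lemma rev_val {N : ℕ} (i : Fin N) : ((Fin.rev i : Fin N) : ℕ) = N - 1 - (i : ℕ) := by
  simp [Fin.rev]; omega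

lemma sum_rev_eq {N : ℕ} (F : Fin N → ℝ) :
    ∑ i : Fin N, F (Fin.rev i) = ∑ i : Fin N, F i :=
  Equiv.sum_comp Fin.revPerm F

lemma sum_fin_pow_rev {N : ℕ} (c : ℝ) : ∑ i : Fin N, c ^ (N - 1 - (i : ℕ)) = Sc N c := by
  rw [← sum_fin_pow (N := N) c, ← sum_rev_eq (fun i => c ^ (i : ℕ))]
  exact Finset.sum_congr rfl fun i _ => by rw [rev_val]

lemma key_eta {N : ℕ} (hN : 2 ≤ N) {c : ℝ} (hc : 2 < c) :
    (1 - 2 / c) * Sc N c ≤ c ^ (N - 1) - 1 := by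
  have hc0 : (0:ℝ) < c := by linarith
  have hgeom : Sc N c * (c - 1) = c ^ N - 1 := geom_sum_mul c N
  have hSc : c + 1 ≤ Sc N c := by
    have h2 : Sc N c = ∑ n ∈ Finset.range N, c ^ n := rfl
    have : ∑ n ∈ Finset.range 2, c ^ n ≤ ∑ n ∈ Finset.range N, c ^ n :=
      Finset.sum_le_sum_of_subset_of_nonneg (Finset.range_subset_range.2 hN)
        (fun n _ _ => le_of_lt (pow_pos hc0 n))
    simp only [Finset.sum_range_succ, Finset.sum_range_zero, zero_add, pow_zero,
      pow_one] at this
    rw [h2]; linarith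
  have hpow : c * c ^ (N - 1) = c ^ N := by
    rw [← pow_succ']; congr 1; omega
  rw [← sub_nonneg]
  have h1 : c * ((c ^ (N - 1) - 1) - (1 - 2 / c) * Sc N c)
      = c ^ N - c - (c - 2) * Sc N c := by
    field_simp; ring_nf; rw [hpow]; ring
  nlinarith [h1, hgeom, hSc, hc0]

lemma le_csup {N : ℕ} (v : Fin N → ℝ) (j : Fin N) : v j ≤ ⨆ i, v i :=
  le_ciSup (Set.Finite.bddAbove (Set.finite_range v)) j

lemma cinf_le {N : ℕ} (v : Fin N → ℝ) (j : Fin N) : ⨅ i, v i ≤ v j :=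
  ciInf_le (Set.Finite.bddBelow (Set.finite_range v)) j

lemma sub_le_diam {N : ℕ} (v : Fin N → ℝ) (j k : Fin N) : v j - v k ≤ diam v :=
  sub_le_sub (le_csup v j) (cinf_le v k)

lemma diam_nonneg {N : ℕ} (hN : 1 ≤ N) (v : Fin N → ℝ) : 0 ≤ diam v := by
  have j : Fin N := ⟨0, by omega⟩
  have := sub_le_diam v j j; linarith

lemma abs_sub_le_diam {N : ℕ} (v : Fin N → ℝ) (j k : Fin N) : |v j - v k| ≤ diam v := by
  rcases abs_cases (v j - v k) with ⟨h, _⟩ | ⟨h, _⟩ <;> rw [h]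
  · exact sub_le_diam v j k
  · have := sub_le_diam v k j; linarith

/-- For a monotone `w`, the sup is the last value and inf is the first. -/
lemma diam_of_monotone {N : ℕ} (hN : 1 ≤ N) {w : Fin N → ℝ} (hw : Monotone w) :
    diam w = w ⟨N - 1, by omega⟩ - w ⟨0, by omega⟩ := by
  have : Nonempty (Fin N) := ⟨⟨0, by omega⟩⟩
  have hlast : (⨆ i, w i) = w ⟨N - 1, by omega⟩ := by
    apply le_antisymm
    · exact ciSup_le fun i => hw (by rcases i with ⟨i, hi⟩; exact Fin.mk_le_mk.2 (by omega))
    · exact le_csup w _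
  have hfirst : (⨅ i, w i) = w ⟨0, by omega⟩ := by
    apply le_antisymm
    · exact cinf_le w _
    · exact le_ciInf fun i => hw (Fin.mk_le_mk.2 (by omega))
  rw [diam, hlast, hfirst]

lemma diam_comp_perm {N : ℕ} (v : Fin N → ℝ) (σ : Equiv.Perm (Fin N)) :
    diam (v ∘ σ) = diam v := by
  unfold diam
  simp only [Function.comp]
  rw [σ.iSup_comp (g := v), σ.iInf_comp (g := v)]

lemma lower_bound {N : ℕ} (hN : 2 ≤ N) {c : ℝ} (hc : 1 ≤ c) {w : Fin N → ℝ}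
    (hw : Monotone w) :
    (c ^ (N - 1) - 1) * (w ⟨N - 1, by omega⟩ - w ⟨0, by omega⟩) ≤
      ∑ i : Fin N, c ^ (i : ℕ) * w i - ∑ i : Fin N, c ^ (N - 1 - (i : ℕ)) * w i := by
  have hc0 : (0:ℝ) < c := by linarith
  have hrevnat : ∀ i : Fin N, N - 1 - ((Fin.rev i : Fin N) : ℕ) = (i : ℕ) := by
    intro i; rw [rev_val]; omega
  have hBrev : ∑ i : Fin N, c ^ (N - 1 - (i : ℕ)) * w i
      = ∑ i : Fin N, c ^ (i : ℕ) * w (Fin.rev i) := by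
    rw [← sum_rev_eq (fun i => c ^ (N - 1 - (i : ℕ)) * w i)]
    exact Finset.sum_congr rfl fun i _ => by rw [hrevnat]
  have hArev : ∑ i : Fin N, c ^ (i : ℕ) * w i
      = ∑ i : Fin N, c ^ (N - 1 - (i : ℕ)) * w (Fin.rev i) := by
    rw [← sum_rev_eq (fun i => c ^ (i : ℕ) * w i)]
    exact Finset.sum_congr rfl fun i _ => by rw [rev_val]
  set A := ∑ i : Fin N, c ^ (i : ℕ) * w i with hA
  set B := ∑ i : Fin N, c ^ (N - 1 - (i : ℕ)) * w i with hB
  have e1 : A - B = ∑ i : Fin N, c ^ (i : ℕ) * (w i - w (Fin.rev i)) := by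
    rw [hA, hBrev, ← Finset.sum_sub_distrib]
    exact Finset.sum_congr rfl fun i _ => by ring
  have e2 : A - B = ∑ i : Fin N, c ^ (N - 1 - (i : ℕ)) * (w (Fin.rev i) - w i) := by
    rw [hArev, hB, ← Finset.sum_sub_distrib]
    exact Finset.sum_congr rfl fun i _ => by ring
  have e3 : ∑ i : Fin N, (c ^ (i : ℕ) - c ^ (N - 1 - (i : ℕ))) * (w i - w (Fin.rev i))
      = (∑ i : Fin N, c ^ (i : ℕ) * (w i - w (Fin.rev i)))
        + ∑ i : Fin N, c ^ (N - 1 - (i : ℕ)) * (w (Fin.rev i) - w i) := by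
    rw [← Finset.sum_add_distrib]
    exact Finset.sum_congr rfl fun i _ => by ring
  have h2S : 2 * (A - B) =
      ∑ i : Fin N, (c ^ (i : ℕ) - c ^ (N - 1 - (i : ℕ))) * (w i - w (Fin.rev i)) := by
    rw [e3, ← e1, ← e2]; ring
  have hTnonneg : ∀ i : Fin N,
      0 ≤ (c ^ (i : ℕ) - c ^ (N - 1 - (i : ℕ))) * (w i - w (Fin.rev i)) := by
    intro i
    rcases le_total ((i : ℕ)) (N - 1 - (i : ℕ)) with h | h
    · have h1 : c ^ (i : ℕ) ≤ c ^ (N - 1 - (i : ℕ)) := pow_le_pow_right₀ hc h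
      have h2 : w i ≤ w (Fin.rev i) := hw (by rw [Fin.le_def, rev_val]; omega)
      nlinarith
    · have h1 : c ^ (N - 1 - (i : ℕ)) ≤ c ^ (i : ℕ) := pow_le_pow_right₀ hc h
      have h2 : w (Fin.rev i) ≤ w i := hw (by rw [Fin.le_def, rev_val]; omega)
      nlinarith
  set i0 : Fin N := ⟨0, by omega⟩ with hi0
  set il : Fin N := ⟨N - 1, by omega⟩ with hil
  have hrev0 : Fin.rev i0 = il := by
    ext; rw [rev_val]; show N - 1 - 0 = N - 1; omega
  have hrevl : Fin.rev il = i0 := by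
    ext; rw [rev_val]; show N - 1 - (N - 1) = 0; omega
  have hne : i0 ≠ il := Fin.ne_of_val_ne (by show 0 ≠ N - 1; omega)
  have hpair : ∑ i ∈ ({i0, il} : Finset (Fin N)),
      (c ^ (i : ℕ) - c ^ (N - 1 - (i : ℕ))) * (w i - w (Fin.rev i))
      ≤ ∑ i : Fin N, (c ^ (i : ℕ) - c ^ (N - 1 - (i : ℕ))) * (w i - w (Fin.rev i)) :=
    Finset.sum_le_sum_of_subset_of_nonneg (Finset.subset_univ _)
      (fun i _ _ => hTnonneg i)
  rw [Finset.sum_pair hne, hrev0, hrevl] at hpair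
  have hval0 : ((i0 : Fin N) : ℕ) = 0 := rfl
  have hvall : ((il : Fin N) : ℕ) = N - 1 := rfl
  rw [hval0, hvall, ← h2S] at hpair
  have hsimp : N - 1 - 0 = N - 1 := by omega
  have hsimp2 : N - 1 - (N - 1) = 0 := by omega
  rw [hsimp, hsimp2] at hpair
  simp only [pow_zero] at hpair
  nlinarith [hpair]

lemma eta_diam_le_Yc {N : ℕ} (hN : 2 ≤ N) {c η : ℝ} (hc : 2 < c) (hη : η = 1 - 2 / c)
    (z : Fin N → ℝ) : η * diam z ≤ Yc c z := by
  have hc0 : (0:ℝ) < c := by linarith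
  have hc1 : (1:ℝ) ≤ c := by linarith
  have hS : 0 < Sc N c := sc_pos (by omega) hc0
  set w : Fin N → ℝ := z ∘ (Tuple.sort z) with hw
  have hmono : Monotone w := Tuple.monotone_sort z
  have hdz : diam z = w ⟨N - 1, by omega⟩ - w ⟨0, by omega⟩ := by
    rw [← diam_comp_perm z (Tuple.sort z), ← hw, diam_of_monotone (by omega) hmono]
  have hlow := lower_bound hN hc1 hmono
  have hkey := key_eta hN hc
  have hdnn : 0 ≤ w ⟨N - 1, by omega⟩ - w ⟨0, by omega⟩ := by
    rw [← hdz]; exact diam_nonneg (by omega) z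
  have hstep : η * Sc N c * (diam z) ≤
      ∑ i : Fin N, c ^ (i : ℕ) * w i - ∑ i : Fin N, c ^ (N - 1 - (i : ℕ)) * w i := by
    refine le_trans ?_ hlow
    rw [hdz, hη]
    exact mul_le_mul_of_nonneg_right (by linarith [hkey]) hdnn
  have hYc : Yc c z = (∑ i : Fin N, c ^ (i : ℕ) * w i
      - ∑ i : Fin N, c ^ (N - 1 - (i : ℕ)) * w i) / Sc N c := rfl
  rw [hYc, le_div_iff₀ hS]
  calc η * diam z * Sc N c = η * Sc N c * diam z := by ring
    _ ≤ _ := hstep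

lemma upper_bound {N : ℕ} {c : ℝ} (hc : 0 < c) (u : Fin N → ℝ) {M : ℝ}
    (hM : ∀ i, |u i| ≤ M) :
    ∑ i : Fin N, c ^ (i : ℕ) * u i - ∑ i : Fin N, c ^ (N - 1 - (i : ℕ)) * u i
      ≤ 2 * Sc N c * M := by
  have h1 : ∑ i : Fin N, c ^ (i : ℕ) * u i ≤ ∑ i : Fin N, c ^ (i : ℕ) * M :=
    Finset.sum_le_sum fun i _ => mul_le_mul_of_nonneg_left
      (le_trans (le_abs_self _) (hM i)) (le_of_lt (pow_pos hc _))
  have h2 : ∑ i : Fin N, c ^ (N - 1 - (i : ℕ)) * (-M) ≤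
      ∑ i : Fin N, c ^ (N - 1 - (i : ℕ)) * u i :=
    Finset.sum_le_sum fun i _ => mul_le_mul_of_nonneg_left
      (neg_le_of_abs_le (hM i)) (le_of_lt (pow_pos hc _))
  have e1 : ∑ i : Fin N, c ^ (i : ℕ) * M = Sc N c * M := by
    rw [← Finset.sum_mul, sum_fin_pow]
  have e2 : ∑ i : Fin N, c ^ (N - 1 - (i : ℕ)) * (-M) = -(Sc N c * M) := by
    rw [← Finset.sum_mul, sum_fin_pow_rev]; ring
  rw [e1] at h1; rw [e2] at h2; linarith

/-! ### Auxiliary analytic lemmas -/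

lemma d4 {f : ℝ → ℝ} (h : ContDiff ℝ 4 f) :
    Differentiable ℝ f ∧ Differentiable ℝ (deriv f) ∧ Differentiable ℝ (deriv (deriv f)) ∧
      Differentiable ℝ (deriv (deriv (deriv f))) := by
  rw [show (4:WithTop ℕ∞) = 3 + 1 by norm_num, contDiff_succ_iff_deriv] at h
  obtain ⟨h0, -, h⟩ := h
  rw [show (3:WithTop ℕ∞) = 2 + 1 by norm_num, contDiff_succ_iff_deriv] at h
  obtain ⟨h1, -, h⟩ := h
  rw [show (2:WithTop ℕ∞) = 1 + 1 by norm_num, contDiff_succ_iff_deriv] at h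
  obtain ⟨h2, -, h⟩ := h
  rw [show (1:WithTop ℕ∞) = 0 + 1 by norm_num, contDiff_succ_iff_deriv] at h
  exact ⟨h0, h1, h2, h.1⟩

lemma sin_bd {x α D : ℝ} (hx : |x| ≤ D) (hα0 : 0 ≤ α) (hα : α ≤ π / 2) :
    |Real.sin (x + α)| ≤ D * Real.cos α + Real.sin α := by
  have hcα : 0 ≤ Real.cos α := Real.cos_nonneg_of_mem_Icc ⟨by linarith [Real.pi_pos], hα⟩
  have hsα : 0 ≤ Real.sin α :=
    Real.sin_nonneg_of_nonneg_of_le_pi hα0 (by linarith [Real.pi_pos])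
  rw [Real.sin_add]
  calc |Real.sin x * Real.cos α + Real.cos x * Real.sin α|
      ≤ |Real.sin x * Real.cos α| + |Real.cos x * Real.sin α| := abs_add_le _ _
    _ = |Real.sin x| * Real.cos α + |Real.cos x| * Real.sin α := by
        rw [abs_mul, abs_mul, abs_of_nonneg hcα, abs_of_nonneg hsα]
    _ ≤ D * Real.cos α + 1 * Real.sin α := by
        gcongr
        · exact le_trans (Real.abs_sin_le_abs) hx
        · exact Real.abs_cos_le_one x
    _ = D * Real.cos α + Real.sin α := by ring

lemma ode_d1 {N : ℕ} (m K α : ℝ) (Ω : Fin N → ℝ) (ψ : Fin N → Fin N → ℝ)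
    (θ : Fin N → ℝ → ℝ) (hsmooth : ∀ i, ContDiff ℝ 4 (θ i))
    (hode : ∀ i, ∀ t : ℝ, 0 ≤ t →
      m * deriv (deriv (θ i)) t + deriv (θ i) t =
        Ω i + (K / N) * ∑ j : Fin N, ψ i j * Real.sin (θ j t - θ i t + α))
    (i : Fin N) (t : ℝ) (ht : 0 < t) :
    m * deriv (deriv (deriv (θ i))) t + deriv (deriv (θ i)) t =
      (K / N) * ∑ j : Fin N, ψ i j *
        (Real.cos (θ j t - θ i t + α) * (deriv (θ j) t - deriv (θ i) t)) := by
  have hd := fun i => d4 (hsmooth i)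
  have hF : HasDerivAt (fun s => m * deriv (deriv (θ i)) s + deriv (θ i) s)
      (m * deriv (deriv (deriv (θ i))) t + deriv (deriv (θ i)) t) t :=
    (((hd i).2.2.1 t).hasDerivAt.const_mul m).add ((hd i).2.1 t).hasDerivAt
  have hG : HasDerivAt (fun s => Ω i + (K / N) * ∑ j : Fin N, ψ i j *
      Real.sin (θ j s - θ i s + α))
      ((K / N) * ∑ j : Fin N, ψ i j *
        (Real.cos (θ j t - θ i t + α) * (deriv (θ j) t - deriv (θ i) t))) t := by
    refine HasDerivAt.const_add _ (HasDerivAt.const_mul _ (HasDerivAt.fun_sum fun j _ => ?_))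
    have h1 : HasDerivAt (fun s => θ j s - θ i s + α)
        (deriv (θ j) t - deriv (θ i) t) t :=
      ((((hd j).1 t).hasDerivAt.sub ((hd i).1 t).hasDerivAt)).add_const α
    exact h1.sin.const_mul (ψ i j)
  have hEq : (fun s => m * deriv (deriv (θ i)) s + deriv (θ i) s) =ᶠ[nhds t]
      (fun s => Ω i + (K / N) * ∑ j : Fin N, ψ i j * Real.sin (θ j s - θ i s + α)) := by
    filter_upwards [IsOpen.mem_nhds isOpen_Ioi ht] with s hs
    exact hode i s (le_of_lt hs)
  exact hF.unique (hG.congr_of_eventuallyEq hEq)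

lemma ode_d2 {N : ℕ} (m K α : ℝ) (Ω : Fin N → ℝ) (ψ : Fin N → Fin N → ℝ)
    (θ : Fin N → ℝ → ℝ) (hsmooth : ∀ i, ContDiff ℝ 4 (θ i))
    (hode : ∀ i, ∀ t : ℝ, 0 ≤ t →
      m * deriv (deriv (θ i)) t + deriv (θ i) t =
        Ω i + (K / N) * ∑ j : Fin N, ψ i j * Real.sin (θ j t - θ i t + α))
    (i : Fin N) (t : ℝ) (ht : 0 < t) :
    m * deriv (deriv (deriv (deriv (θ i)))) t + deriv (deriv (deriv (θ i))) t =
      (K / N) * ∑ j : Fin N, ψ i j *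
        ((-Real.sin (θ j t - θ i t + α) * (deriv (θ j) t - deriv (θ i) t)) *
            (deriv (θ j) t - deriv (θ i) t)
          + Real.cos (θ j t - θ i t + α) *
            (deriv (deriv (θ j)) t - deriv (deriv (θ i)) t)) := by
  have hd := fun i => d4 (hsmooth i)
  have hF : HasDerivAt (fun s => m * deriv (deriv (deriv (θ i))) s + deriv (deriv (θ i)) s)
      (m * deriv (deriv (deriv (deriv (θ i)))) t + deriv (deriv (deriv (θ i))) t) t :=
    (((hd i).2.2.2 t).hasDerivAt.const_mul m).add ((hd i).2.2.1 t).hasDerivAt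
  have hG : HasDerivAt (fun s => (K / N) * ∑ j : Fin N, ψ i j *
      (Real.cos (θ j s - θ i s + α) * (deriv (θ j) s - deriv (θ i) s)))
      ((K / N) * ∑ j : Fin N, ψ i j *
        ((-Real.sin (θ j t - θ i t + α) * (deriv (θ j) t - deriv (θ i) t)) *
            (deriv (θ j) t - deriv (θ i) t)
          + Real.cos (θ j t - θ i t + α) *
            (deriv (deriv (θ j)) t - deriv (deriv (θ i)) t))) t := by
    refine HasDerivAt.const_mul _ (HasDerivAt.fun_sum fun j _ => ?_)
    have h1 : HasDerivAt (fun s => θ j s - θ i s + α)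
        (deriv (θ j) t - deriv (θ i) t) t :=
      ((((hd j).1 t).hasDerivAt.sub ((hd i).1 t).hasDerivAt)).add_const α
    have h2 : HasDerivAt (fun s => deriv (θ j) s - deriv (θ i) s)
        (deriv (deriv (θ j)) t - deriv (deriv (θ i)) t) t :=
      ((hd j).2.1 t).hasDerivAt.sub ((hd i).2.1 t).hasDerivAt
    exact (h1.cos.mul h2).const_mul (ψ i j)
  have hEq : (fun s => m * deriv (deriv (deriv (θ i))) s + deriv (deriv (θ i)) s) =ᶠ[nhds t]
      (fun s => (K / N) * ∑ j : Fin N, ψ i j *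
        (Real.cos (θ j s - θ i s + α) * (deriv (θ j) s - deriv (θ i) s))) := by
    filter_upwards [IsOpen.mem_nhds isOpen_Ioi ht] with s hs
    exact ode_d1 m K α Ω ψ θ hsmooth hode i s hs
  exact hF.unique (hG.congr_of_eventuallyEq hEq)

set_option maxHeartbeats 1000000 in
/-- first-order differential inequality for the jerk combination `B`. -/
theorem stmt16 {N : ℕ} (hN : 2 ≤ N) (m K α ψu : ℝ) (hm : 0 < m) (hK : 0 < K)
    (hα0 : 0 < α) (hα : α < π / 2)
    (Ω : Fin N → ℝ) (ψ : Fin N → Fin N → ℝ)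
    (hψ : ∀ i j, 0 ≤ ψ i j ∧ ψ i j ≤ ψu)
    (θ : Fin N → ℝ → ℝ) (hsmooth : ∀ i, ContDiff ℝ 4 (θ i))
    (hode : ∀ i, ∀ t : ℝ, 0 ≤ t →
      m * deriv (deriv (θ i)) t + deriv (θ i) t =
        Ω i + (K / N) * ∑ j : Fin N, ψ i j * Real.sin (θ j t - θ i t + α))
    (c η : ℝ) (hc : 2 < c) (hη : η = 1 - 2 / c)
    (Dinf : ℝ) (hD : 0 < Dinf)
    (t1 t2 : ℝ) (ht1 : 0 ≤ t1)
    (hdiam : ∀ t ∈ Set.Ioo t1 t2, diam (fun i => θ i t) ≤ Dinf)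
    (χ : Equiv.Perm (Fin N))
    (hord : ∀ t ∈ Set.Ioo t1 t2,
      Monotone fun i => deriv (deriv (deriv (θ (χ i)))) t) :
    ∀ t ∈ Set.Ioo t1 t2,
      m * deriv (comb c χ (fun i => deriv (deriv (deriv (θ i))))) t
          + comb c χ (fun i => deriv (deriv (deriv (θ i)))) t ≤
        (2 * K * ψu / η) * Yc c (fun i => deriv (deriv (θ i)) t)
          + (2 * K * ψu * (Dinf * Real.cos α + Real.sin α) / η ^ 2)
            * (Yc c (fun i => deriv (θ i) t)) ^ 2 := by
  intro t ht
  obtain ⟨ht1', ht2'⟩ := ht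
  have htpos : 0 < t := lt_of_le_of_lt ht1 ht1'
  have hd := fun i => d4 (hsmooth i)
  have hc0 : (0:ℝ) < c := by linarith
  have hη0 : 0 < η := by
    rw [hη]
    have h2c : 2 / c < 1 := by rw [div_lt_one hc0]; linarith
    linarith
  have hS : 0 < Sc N c := sc_pos (by omega) hc0
  have hNpos : (0:ℝ) < (N:ℝ) := by exact_mod_cast (by omega : 0 < N)
  have hψu : 0 ≤ ψu := le_trans (hψ ⟨0, by omega⟩ ⟨0, by omega⟩).1
    (hψ ⟨0, by omega⟩ ⟨0, by omega⟩).2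
  have hcα : 0 ≤ Real.cos α := Real.cos_nonneg_of_mem_Icc
    ⟨by linarith [Real.pi_pos], le_of_lt hα⟩
  have hsα : 0 ≤ Real.sin α := Real.sin_nonneg_of_nonneg_of_le_pi (le_of_lt hα0)
    (by linarith [Real.pi_pos])
  set β : ℝ := Dinf * Real.cos α + Real.sin α with hβdef
  have hβ : 0 ≤ β := by positivity
  set za : Fin N → ℝ := fun i => deriv (deriv (θ i)) t with hza
  set zω : Fin N → ℝ := fun i => deriv (θ i) t with hzω
  set Da : ℝ := diam za with hDa
  set Dω : ℝ := diam zω with hDω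
  have hDa0 : 0 ≤ Da := diam_nonneg (by omega) za
  have hDω0 : 0 ≤ Dω := diam_nonneg (by omega) zω
  set M : ℝ := K * (ψu * (Da + β * Dω ^ 2)) with hM
  -- bound on |m b' + b| for each oscillator
  have hQ : ∀ j : Fin N,
      |m * deriv (deriv (deriv (deriv (θ j)))) t + deriv (deriv (deriv (θ j))) t| ≤ M := by
    intro j
    rw [ode_d2 m K α Ω ψ θ hsmooth hode j t htpos]
    have hterm : ∀ k : Fin N,
        |ψ j k * ((-Real.sin (θ k t - θ j t + α) * (deriv (θ k) t - deriv (θ j) t)) *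
            (deriv (θ k) t - deriv (θ j) t)
          + Real.cos (θ k t - θ j t + α) *
            (deriv (deriv (θ k)) t - deriv (deriv (θ j)) t))| ≤ ψu * (Da + β * Dω ^ 2) := by
      intro k
      have hu : |deriv (θ k) t - deriv (θ j) t| ≤ Dω := abs_sub_le_diam zω k j
      have hv : |deriv (deriv (θ k)) t - deriv (deriv (θ j)) t| ≤ Da :=
        abs_sub_le_diam za k j
      have hX : |θ k t - θ j t| ≤ Dinf :=
        le_trans (abs_sub_le_diam (fun i => θ i t) k j) (hdiam t ⟨ht1', ht2'⟩)
      have hsin : |Real.sin (θ k t - θ j t + α)| ≤ β :=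
        sin_bd hX (le_of_lt hα0) (le_of_lt hα)
      have hcos : |Real.cos (θ k t - θ j t + α)| ≤ 1 := Real.abs_cos_le_one _
      set u := deriv (θ k) t - deriv (θ j) t
      set v := deriv (deriv (θ k)) t - deriv (deriv (θ j)) t
      set X := θ k t - θ j t + α
      have habs1 : |(-Real.sin X * u) * u| ≤ β * Dω ^ 2 := by
        rw [abs_mul, abs_mul, abs_neg]
        calc |Real.sin X| * |u| * |u| ≤ β * Dω * Dω :=
              mul_le_mul (mul_le_mul hsin hu (abs_nonneg _) hβ) hu (abs_nonneg _)
                (by positivity)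
          _ = β * Dω ^ 2 := by ring
      have habs2 : |Real.cos X * v| ≤ Da := by
        rw [abs_mul]
        calc |Real.cos X| * |v| ≤ 1 * Da :=
              mul_le_mul hcos hv (abs_nonneg _) zero_le_one
          _ = Da := one_mul _
      calc |ψ j k * ((-Real.sin X * u) * u + Real.cos X * v)|
          = ψ j k * |(-Real.sin X * u) * u + Real.cos X * v| := by
            rw [abs_mul, abs_of_nonneg (hψ j k).1]
        _ ≤ ψu * (β * Dω ^ 2 + Da) := by
            refine mul_le_mul (hψ j k).2 (le_trans (abs_add_le _ _) ?_) (abs_nonneg _) hψu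
            exact add_le_add habs1 habs2
        _ = ψu * (Da + β * Dω ^ 2) := by ring
    have hsum : |∑ k : Fin N, ψ j k * ((-Real.sin (θ k t - θ j t + α) *
        (deriv (θ k) t - deriv (θ j) t)) * (deriv (θ k) t - deriv (θ j) t)
          + Real.cos (θ k t - θ j t + α) *
            (deriv (deriv (θ k)) t - deriv (deriv (θ j)) t))|
        ≤ (N : ℝ) * (ψu * (Da + β * Dω ^ 2)) := by
      refine le_trans (Finset.abs_sum_le_sum_abs _ _) ?_
      calc ∑ k : Fin N, |ψ j k * _| ≤ ∑ _k : Fin N, ψu * (Da + β * Dω ^ 2) :=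
            Finset.sum_le_sum fun k _ => hterm k
        _ = (N : ℝ) * (ψu * (Da + β * Dω ^ 2)) := by
            rw [Finset.sum_const, Finset.card_univ, Fintype.card_fin, nsmul_eq_mul]
    rw [abs_mul, abs_of_nonneg (le_of_lt (div_pos hK hNpos))]
    calc K / (N : ℝ) * |_| ≤ K / (N : ℝ) * ((N : ℝ) * (ψu * (Da + β * Dω ^ 2))) := by
          exact mul_le_mul_of_nonneg_left hsum (le_of_lt (div_pos hK hNpos))
      _ = M := by rw [hM]; field_simp
  -- derivative of comb
  have hcombD : HasDerivAt (comb c χ (fun i => deriv (deriv (deriv (θ i)))))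
      ((∑ i : Fin N, c ^ (i : ℕ) * deriv (deriv (deriv (deriv (θ (χ i))))) t
        - ∑ i : Fin N, c ^ (N - 1 - (i : ℕ)) * deriv (deriv (deriv (deriv (θ (χ i))))) t)
        / Sc N c) t := by
    unfold comb
    refine HasDerivAt.div_const ?_ _
    refine HasDerivAt.sub (HasDerivAt.fun_sum fun i _ => ?_) (HasDerivAt.fun_sum fun i _ => ?_)
    · exact (((hd (χ i)).2.2.2 t).hasDerivAt).const_mul _
    · exact (((hd (χ i)).2.2.2 t).hasDerivAt).const_mul _
  have hcombt : comb c χ (fun i => deriv (deriv (deriv (θ i)))) t =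
      (∑ i : Fin N, c ^ (i : ℕ) * deriv (deriv (deriv (θ (χ i)))) t
        - ∑ i : Fin N, c ^ (N - 1 - (i : ℕ)) * deriv (deriv (deriv (θ (χ i)))) t)
        / Sc N c := rfl
  -- express LHS as combination of Q's
  set u : Fin N → ℝ := fun i =>
    m * deriv (deriv (deriv (deriv (θ (χ i))))) t + deriv (deriv (deriv (θ (χ i)))) t
    with hu
  have hLHS : m * deriv (comb c χ (fun i => deriv (deriv (deriv (θ i))))) t
      + comb c χ (fun i => deriv (deriv (deriv (θ i)))) t =
      (∑ i : Fin N, c ^ (i : ℕ) * u i - ∑ i : Fin N, c ^ (N - 1 - (i : ℕ)) * u i)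
        / Sc N c := by
    rw [hcombD.deriv, hcombt]
    rw [← mul_div_assoc, ← add_div]
    congr 1
    have e1 : ∑ i : Fin N, c ^ (i : ℕ) * u i =
        m * ∑ i : Fin N, c ^ (i : ℕ) * deriv (deriv (deriv (deriv (θ (χ i))))) t
        + ∑ i : Fin N, c ^ (i : ℕ) * deriv (deriv (deriv (θ (χ i)))) t := by
      rw [Finset.mul_sum, ← Finset.sum_add_distrib]
      exact Finset.sum_congr rfl fun i _ => by rw [hu]; ring
    have e2 : ∑ i : Fin N, c ^ (N - 1 - (i : ℕ)) * u i =
        m * ∑ i : Fin N, c ^ (N - 1 - (i : ℕ)) * deriv (deriv (deriv (deriv (θ (χ i))))) t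
        + ∑ i : Fin N, c ^ (N - 1 - (i : ℕ)) * deriv (deriv (deriv (θ (χ i)))) t := by
      rw [Finset.mul_sum, ← Finset.sum_add_distrib]
      exact Finset.sum_congr rfl fun i _ => by rw [hu]; ring
    rw [e1, e2]; ring
  -- upper bound
  have hub := upper_bound hc0 u (M := M) (fun i => hQ (χ i))
  have hLHS2 : m * deriv (comb c χ (fun i => deriv (deriv (deriv (θ i))))) t
      + comb c χ (fun i => deriv (deriv (deriv (θ i)))) t ≤ 2 * M := by
    rw [hLHS, div_le_iff₀ hS]
    calc ∑ i : Fin N, c ^ (i : ℕ) * u i - ∑ i : Fin N, c ^ (N - 1 - (i : ℕ)) * u i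
        ≤ 2 * Sc N c * M := hub
      _ = 2 * M * Sc N c := by ring
  -- relate to Yc
  have hYa : η * Da ≤ Yc c za := eta_diam_le_Yc hN hc hη za
  have hYω : η * Dω ≤ Yc c zω := eta_diam_le_Yc hN hc hη zω
  have hYω0 : 0 ≤ Yc c zω := le_trans (by positivity) hYω
  have hsq : η ^ 2 * Dω ^ 2 ≤ (Yc c zω) ^ 2 := by
    have := mul_self_le_mul_self (by positivity) hYω
    nlinarith
  have hfin : 2 * M ≤ (2 * K * ψu / η) * Yc c za + (2 * K * ψu * β / η ^ 2)
      * (Yc c zω) ^ 2 := by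
    have hA : 2 * K * ψu * Da ≤ (2 * K * ψu / η) * Yc c za := by
      rw [div_mul_eq_mul_div, le_div_iff₀ hη0]
      nlinarith [mul_le_mul_of_nonneg_left hYa (by positivity : (0:ℝ) ≤ 2 * K * ψu)]
    have hB : 2 * K * ψu * β * Dω ^ 2 ≤ (2 * K * ψu * β / η ^ 2) * (Yc c zω) ^ 2 := by
      rw [div_mul_eq_mul_div, le_div_iff₀ (by positivity : (0:ℝ) < η ^ 2)]
      nlinarith [mul_le_mul_of_nonneg_left hsq (by positivity : (0:ℝ) ≤ 2 * K * ψu * β)]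
    calc 2 * M = 2 * K * ψu * Da + 2 * K * ψu * β * Dω ^ 2 := by rw [hM]; ring
      _ ≤ _ := add_le_add hA hB
  exact le_trans hLHS2 hfin
end
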